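/- Let N be a finite set of non-monitors, σ = |N|, P a family of paths, and for v ∈ N let MSC(v) be the minimum size of W ⊆ N \ {v} with P_v ⊆ ⋃_{w∈W} P_w (MSC(v) := σ if none exists and also when some p ∈ P_v satisfies p ∩ N = {v}). Corollary: for k ≤ σ − 1, the maximum k-identifiable set S*(k) satisfies { v ∈ N : MSC(v) ≥ k + 1 } ⊆ S*(k) ⊆ { v ∈ N : MSC(v) ≥ k }, assuming P_v ≠ ∅ for all v ∈ N. -/

import Mathlib

variable {V : Type*} [DecidableEq V]

/-- A set `S` of non-monitors is `k`-identifiable: any two failure sets of size at most `k`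
that differ within `S` are distinguished by the failure state of some path. -/
def kIdent (N : Finset V) (P : Set (Finset V)) (S : Finset V) (k : ℕ) : Prop :=
  ∀ F₁ F₂ : Finset V, F₁ ⊆ N → F₂ ⊆ N → F₁.card ≤ k → F₂.card ≤ k →
    F₁ ∩ S ≠ F₂ ∩ S → ∃ p ∈ P, Xor' (p ∩ F₁ = ∅) (p ∩ F₂ = ∅)

open scoped Classical

/-- Minimum set cover number of the paths through `v` by path sets of other non-monitors;
set to `σ = |N|` when no cover exists, and also when `v` lies on a path whose only
non-monitor is `v`. -/
noncomputable def MSC (N : Finset V) (P : Set (Finset V)) (v : V) : ℕ :=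
  if (∃ p ∈ P, v ∈ p ∧ p ∩ N = {v}) ∨
      ¬ ∃ W : Finset V, W ⊆ N.erase v ∧ ∀ p ∈ P, v ∈ p → ∃ w ∈ W, w ∈ p
  then N.card
  else sInf {n | ∃ W : Finset V, W ⊆ N.erase v ∧ W.card = n ∧
    ∀ p ∈ P, v ∈ p → ∃ w ∈ W, w ∈ p}

theorem Sstar_UP_bounds (N : Finset V) (P : Set (Finset V)) (k : ℕ)
    (hk : k ≤ N.card - 1) (hP : ∀ v ∈ N, ∃ p ∈ P, v ∈ p) (Sstar : Finset V)
    (hSstar : ∀ v, v ∈ Sstar ↔ ∃ S : Finset V, S ⊆ N ∧ kIdent N P S k ∧ v ∈ S) :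
    (∀ v ∈ N, k + 1 ≤ MSC N P v → v ∈ Sstar) ∧
      (∀ v ∈ Sstar, k ≤ MSC N P v) := by
  constructor
  · intro v hv hMSC
    rw [hSstar]
    refine ⟨{v}, by simpa using hv, ?_, by simp⟩
    intro F₁ F₂ h1 h2 hc1 hc2 hne
    have key : ∀ F : Finset V, F ⊆ N → v ∉ F → F.card ≤ k →
        ∃ p ∈ P, v ∈ p ∧ p ∩ F = ∅ := by
      intro F hFN hvF hFc
      by_contra h
      push_neg at h
      have hsub : F ⊆ N.erase v := fun x hx =>
        Finset.mem_erase.mpr ⟨fun hxv => hvF (hxv ▸ hx), hFN hx⟩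
      have hcov : ∀ p ∈ P, v ∈ p → ∃ w ∈ F, w ∈ p := by
        intro p hp hvp
        have := h p hp hvp
        rcases this with ⟨x, hx⟩
        rw [Finset.mem_inter] at hx
        exact ⟨x, hx.2, hx.1⟩
      unfold MSC at hMSC
      split_ifs at hMSC with hcond
      · rcases hcond with ⟨p, hp, hvp, hpN⟩ | hnc
        · refine Finset.nonempty_iff_ne_empty.mp (h p hp hvp) ?_
          ext x
          simp only [Finset.mem_inter, Finset.notMem_empty, iff_false]
          rintro ⟨hxp, hxF⟩
          have : x ∈ p ∩ N := Finset.mem_inter.mpr ⟨hxp, hFN hxF⟩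
          rw [hpN, Finset.mem_singleton] at this
          exact hvF (this ▸ hxF)
        · exact hnc ⟨F, hsub, hcov⟩
      · have : sInf {n | ∃ W : Finset V, W ⊆ N.erase v ∧ W.card = n ∧
            ∀ p ∈ P, v ∈ p → ∃ w ∈ W, w ∈ p} ≤ F.card :=
          Nat.sInf_le ⟨F, hsub, rfl, hcov⟩
        omega
    have hv12 : (v ∈ F₁ ∧ v ∉ F₂) ∨ (v ∈ F₂ ∧ v ∉ F₁) := by
      by_contra hcon
      push_neg at hcon
      apply hne
      ext x
      simp only [Finset.mem_inter, Finset.mem_singleton]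
      constructor <;> rintro ⟨hx, rfl⟩ <;> refine ⟨?_, rfl⟩ <;> tauto
    rcases hv12 with ⟨hv1, hv2⟩ | ⟨hv2, hv1⟩
    · obtain ⟨p, hp, hvp, hpe⟩ := key F₂ h2 hv2 hc2
      refine ⟨p, hp, Or.inr ⟨hpe, fun hc => ?_⟩⟩
      have : v ∈ p ∩ F₁ := Finset.mem_inter.mpr ⟨hvp, hv1⟩
      simp [hc] at this
    · obtain ⟨p, hp, hvp, hpe⟩ := key F₁ h1 hv1 hc1
      refine ⟨p, hp, Or.inl ⟨hpe, fun hc => ?_⟩⟩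
      have : v ∈ p ∩ F₂ := Finset.mem_inter.mpr ⟨hvp, hv2⟩
      simp [hc] at this
  · intro v hv
    obtain ⟨S, hSN, hkid, hvS⟩ := (hSstar v).1 hv
    by_contra hcon
    push_neg at hcon
    have hvN : v ∈ N := hSN hvS
    have hcard : 1 ≤ N.card := Finset.card_pos.mpr ⟨v, hvN⟩
    unfold MSC at hcon
    split_ifs at hcon with hcnd
    · omega
    · push_neg at hcnd
      obtain ⟨hA, W0, hW0⟩ := hcnd
      have hne : {n | ∃ W : Finset V, W ⊆ N.erase v ∧ W.card = n ∧
          ∀ p ∈ P, v ∈ p → ∃ w ∈ W, w ∈ p}.Nonempty := ⟨W0.card, W0, hW0.1, rfl, hW0.2⟩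
      obtain ⟨W, hWsub, hWcard, hWcov⟩ := Nat.sInf_mem hne
      have hvW : v ∉ W := fun hvw => (Finset.mem_erase.mp (hWsub hvw)).1 rfl
      have hF1N : insert v W ⊆ N := by
        intro x hx
        rcases Finset.mem_insert.mp hx with rfl | hxW
        · exact hvN
        · exact (Finset.mem_erase.mp (hWsub hxW)).2
      have hF2N : W ⊆ N := fun x hx => (Finset.mem_erase.mp (hWsub hx)).2
      have hc1 : (insert v W).card ≤ k := by
        have := Finset.card_insert_le v W
        omega
      have hc2 : W.card ≤ k := by omega
      have hint : (insert v W) ∩ S ≠ W ∩ S := by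
        intro heq
        have : v ∈ W ∩ S := heq ▸ Finset.mem_inter.mpr ⟨Finset.mem_insert_self v W, hvS⟩
        exact hvW (Finset.mem_inter.mp this).1
      obtain ⟨p, hp, hxor⟩ := hkid (insert v W) W hF1N hF2N hc1 hc2 hint
      rcases hxor with ⟨he1, hne2⟩ | ⟨he2, hne1⟩
      · apply hne2
        have : p ∩ W ⊆ p ∩ insert v W :=
          Finset.inter_subset_inter (le_refl p) (Finset.subset_insert v W)
        rw [he1] at this
        exact Finset.subset_empty.mp this
      · apply hne1
        ext x
        simp only [Finset.mem_inter, Finset.mem_insert, Finset.notMem_empty, iff_false]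
        rintro ⟨hxp, rfl | hxW⟩
        · obtain ⟨w, hwW, hwp⟩ := hWcov p hp hxp
          have : w ∈ p ∩ W := Finset.mem_inter.mpr ⟨hwp, hwW⟩
          simp [he2] at this
        · have : x ∈ p ∩ W := Finset.mem_inter.mpr ⟨hxp, hxW⟩
          simp [he2] at this
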